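/- arXiv:2205.14093 — 3 statements merged into one kernel-verified Lean document; each statement's English description precedes it below -/
import Mathlib

section
/- Let r be a skew-symmetric 3×3 real matrix, K ∈ ℝ³ with r·K = 0 and K ≠ 0, and define the vector field ξ(x) = r·x + 2⟨K,x⟩·x − ‖x‖²·K on ℝ³. Then the origin is an isolated zero of ξ: there exists ε > 0 such that ξ(x) ≠ 0 for all x with 0 < ‖x‖ < ε. -/
open Matrix
open scoped RealInnerProductSpace

/-- The origin is an isolated zero of the essential conformal Killing field
`ξ(x) = r·x + 2⟨K,x⟩x − ‖x‖²K` (with `r` skew-symmetric, `r·K = 0`, `K ≠ 0`). -/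
theorem stmt3 (r : Matrix (Fin 3) (Fin 3) ℝ) (hr : rᵀ = -r)
    (K : EuclideanSpace ℝ (Fin 3)) (hK : K ≠ 0)
    (hrK : ∀ i, ∑ j, r i j * K j = 0) :
    ∃ ε > (0 : ℝ), ∀ x : EuclideanSpace ℝ (Fin 3), 0 < ‖x‖ → ‖x‖ < ε →
      (fun i => (∑ j, r i j * x j) + 2 * ⟪K, x⟫ * x i - ‖x‖ ^ 2 * K i) ≠
        (fun _ => 0 : Fin 3 → ℝ) := by
  refine ⟨1, one_pos, fun x hx _ h => ?_⟩
  have heq : ∀ i, (∑ j, r i j * x j) + 2 * ⟪K, x⟫ * x i - ‖x‖ ^ 2 * K i = 0 :=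
    fun i => congrFun h i
  have hskew : ∀ i j, r i j = - r j i := by
    intro i j
    have := congrFun (congrFun hr j) i
    simpa [Matrix.transpose_apply, Matrix.neg_apply] using this
  -- key expansion
  have key : ∀ (v : Fin 3 → ℝ),
      ∑ i, v i * ((∑ j, r i j * x j) + 2 * ⟪K, x⟫ * x i - ‖x‖ ^ 2 * K i)
        = (∑ i, ∑ j, v i * (r i j * x j)) + 2 * ⟪K, x⟫ * (∑ i, v i * x i)
          - ‖x‖ ^ 2 * (∑ i, v i * K i) := by
    intro v
    rw [Finset.mul_sum, Finset.mul_sum, ← Finset.sum_add_distrib, ← Finset.sum_sub_distrib]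
    refine Finset.sum_congr rfl fun i _ => ?_
    simp only [mul_add, mul_sub, Finset.mul_sum]
    ring
  have hinner : ⟪K, x⟫ = ∑ i, K i * x i := by
    simp [PiLp.inner_apply, RCLike.inner_apply, conj_trivial, mul_comm]
  have hN : (‖x‖ : ℝ) ^ 2 = ∑ i, x i * x i := by
    rw [← real_inner_self_eq_norm_sq]
    simp only [PiLp.inner_apply, RCLike.inner_apply, conj_trivial]
  have hKN : (‖K‖ : ℝ) ^ 2 = ∑ i, K i * K i := by
    rw [← real_inner_self_eq_norm_sq]
    simp only [PiLp.inner_apply, RCLike.inner_apply, conj_trivial]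
  -- skew quadratic form vanishes
  have hS : (∑ i, ∑ j, x i * (r i j * x j)) = 0 := by
    have hneg : (∑ i, ∑ j, x i * (r i j * x j)) = - ∑ i, ∑ j, x i * (r i j * x j) := by
      conv_lhs => rw [Finset.sum_comm]
      rw [← Finset.sum_neg_distrib]
      refine Finset.sum_congr rfl fun i _ => ?_
      rw [← Finset.sum_neg_distrib]
      refine Finset.sum_congr rfl fun j _ => ?_
      rw [hskew j i]
      ring
    linarith
  -- r annihilates K (also on the left, by skewness)
  have hKr : (∑ i, ∑ j, K i * (r i j * x j)) = 0 := by
    rw [Finset.sum_comm]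
    refine Finset.sum_eq_zero fun j _ => ?_
    have : (∑ i, K i * (r i j * x j)) = x j * -(∑ i, r j i * K i) := by
      rw [mul_neg, Finset.mul_sum, ← Finset.sum_neg_distrib]
      refine Finset.sum_congr rfl fun i _ => ?_
      rw [hskew i j]
      ring
    rw [this, hrK j, neg_zero, mul_zero]
  have s1 : (∑ i, ∑ j, x i * (r i j * x j)) + 2 * ⟪K, x⟫ * (∑ i, x i * x i)
      - ‖x‖ ^ 2 * (∑ i, x i * K i) = 0 := by
    rw [← key x]
    exact Finset.sum_eq_zero fun i _ => by rw [heq i, mul_zero]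
  have s2 : (∑ i, ∑ j, K i * (r i j * x j)) + 2 * ⟪K, x⟫ * (∑ i, K i * x i)
      - ‖x‖ ^ 2 * (∑ i, K i * K i) = 0 := by
    rw [← key K]
    exact Finset.sum_eq_zero fun i _ => by rw [heq i, mul_zero]
  have hxK : (∑ i, x i * K i) = ⟪K, x⟫ := by
    rw [hinner]
    exact Finset.sum_congr rfl fun i _ => mul_comm _ _
  rw [hS, ← hN, hxK] at s1
  rw [hKr, ← hinner, ← hKN] at s2
  -- from s1 : 2 ⟪K,x⟫ ‖x‖² − ‖x‖² ⟪K,x⟫ = 0, so ⟪K,x⟫ = 0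
  have hA : ⟪K, x⟫ = 0 := by
    have h1 : ⟪K, x⟫ * ‖x‖ ^ 2 = 0 := by linarith
    have h2 : (‖x‖ : ℝ) ^ 2 ≠ 0 := by positivity
    exact (mul_eq_zero.mp h1).resolve_right h2
  have hxpos : (0 : ℝ) < ‖x‖ ^ 2 := by positivity
  have hKpos : (0 : ℝ) < ‖K‖ ^ 2 := by
    have : ‖K‖ ≠ 0 := fun hn => hK (norm_eq_zero.mp hn)
    positivity
  rw [hA] at s2
  nlinarith
end

section
/- The Euclidean Lie algebra e(3) = so(3) ⋉ ℝ³ (infinitesimal isometries of flat ℝ³) has no Lie subalgebra of dimension 5. -/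
open Matrix

attribute [local instance] LieRing.ofAssociativeRing

/-- Membership in the image of `e(3) = so(3) ⋉ ℝ³` inside `gl(4,ℝ)`:
matrices `[[r, p],[0, 0]]` with `r` skew-symmetric (affine vector fields
`x ↦ p + r·x`). -/
def inE3 (M : Matrix (Fin 4) (Fin 4) ℝ) : Prop :=
  (∀ j, M 3 j = 0) ∧ ∀ i j : Fin 4, i ≠ 3 → j ≠ 3 → M i j = - M j i

/-- The Euclidean Lie algebra `e(3) = so(3) ⋉ ℝ³` realized as a Lie subalgebra of
`gl(4,ℝ)`. -/
def e3 : LieSubalgebra ℝ (Matrix (Fin 4) (Fin 4) ℝ) where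
  carrier := {M | inE3 M}
  add_mem' := by
    rintro A B ⟨hA1, hA2⟩ ⟨hB1, hB2⟩
    refine ⟨fun j => ?_, fun i j hi hj => ?_⟩
    · simp [Matrix.add_apply, hA1 j, hB1 j]
    · simp only [Matrix.add_apply]
      rw [hA2 i j hi hj, hB2 i j hi hj]; ring
  zero_mem' := by
    refine ⟨fun j => rfl, fun i j _ _ => by simp⟩
  smul_mem' := by
    rintro c A ⟨hA1, hA2⟩
    refine ⟨fun j => by simp [hA1 j], fun i j hi hj => ?_⟩
    simp only [Matrix.smul_apply, smul_eq_mul]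
    rw [hA2 i j hi hj]; ring
  lie_mem' := by
    rintro A B ⟨hA1, hA2⟩ ⟨hB1, hB2⟩
    show inE3 ⁅A, B⁆
    constructor
    · intro j
      simp [Ring.lie_def, Matrix.sub_apply, Matrix.mul_apply, hA1, hB1]
    · intro i j hi hj
      have key : ∀ k : Fin 4,
          A i k * B k j - B i k * A k j = -(A j k * B k i - B j k * A k i) := by
        intro k
        by_cases hk : k = 3
        · subst hk
          rw [hA1 j, hA1 i, hB1 j, hB1 i]; ring
        · rw [hA2 i k hi hk, hA2 j k hj hk, hB2 i k hi hk, hB2 j k hj hk]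
          ring
      simp only [Ring.lie_def, Matrix.sub_apply, Matrix.mul_apply]
      calc (∑ k, A i k * B k j) - ∑ k, B i k * A k j
          = ∑ k, (A i k * B k j - B i k * A k j) := by
            rw [Finset.sum_sub_distrib]
        _ = ∑ k, -(A j k * B k i - B j k * A k i) :=
            Finset.sum_congr rfl fun k _ => key k
        _ = -((∑ k, A j k * B k i) - ∑ k, B j k * A k i) := by
            rw [← Finset.sum_sub_distrib, Finset.sum_neg_distrib]

noncomputable section AuxE3

theorem cons_val_five' {α : Type*} {m : ℕ} (x : α) (u : Fin (m + 5) → α) :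
    Matrix.vecCons x u 5 =
      Matrix.vecHead (Matrix.vecTail (Matrix.vecTail (Matrix.vecTail (Matrix.vecTail u)))) := rfl

/-- coordinates for `e(3)`. -/
def PhiFun (c : Fin 6 → ℝ) : Matrix (Fin 4) (Fin 4) ℝ :=
  !![0, c 0, c 1, c 3; -c 0, 0, c 2, c 4; -c 1, -c 2, 0, c 5; 0, 0, 0, 0]

def Phi : (Fin 6 → ℝ) →ₗ[ℝ] Matrix (Fin 4) (Fin 4) ℝ where
  toFun := PhiFun
  map_add' c d := by
    ext i j
    fin_cases i <;> fin_cases j <;> simp [PhiFun, Matrix.vecHead, Matrix.vecTail] <;> ring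
  map_smul' r c := by
    ext i j
    fin_cases i <;> fin_cases j <;> simp [PhiFun, Matrix.vecHead, Matrix.vecTail] <;> ring

/-- The bracket in coordinates. -/
def br (c d : Fin 6 → ℝ) : Fin 6 → ℝ :=
  ![c 2 * d 1 - c 1 * d 2,
    c 0 * d 2 - c 2 * d 0,
    c 1 * d 0 - c 0 * d 1,
    c 0 * d 4 + c 1 * d 5 - c 4 * d 0 - c 5 * d 1,
    c 2 * d 5 + c 3 * d 0 - c 0 * d 3 - c 5 * d 2,
    c 3 * d 1 + c 4 * d 2 - c 1 * d 3 - c 2 * d 4]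

theorem lie_Phi (c d : Fin 6 → ℝ) : ⁅Phi c, Phi d⁆ = Phi (br c d) := by
  ext i j
  simp only [Ring.lie_def, Matrix.sub_apply, Matrix.mul_apply, Fin.sum_univ_four]
  fin_cases i <;> fin_cases j <;>
    simp [Phi, PhiFun, br, Matrix.vecHead, Matrix.vecTail, cons_val_five'] <;> ring

theorem PhiFun_mem (c : Fin 6 → ℝ) : inE3 (PhiFun c) := by
  constructor
  · intro j; fin_cases j <;> simp [PhiFun, Matrix.vecHead, Matrix.vecTail]
  · intro i j hi hj
    fin_cases i <;> fin_cases j <;>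
      simp_all [PhiFun, Matrix.vecHead, Matrix.vecTail]

theorem PhiFun_surj (M : Matrix (Fin 4) (Fin 4) ℝ) (hM : inE3 M) :
    PhiFun (![M 0 1, M 0 2, M 1 2, M 0 3, M 1 3, M 2 3]) = M := by
  obtain ⟨h1, h2⟩ := hM
  have h00 : M 0 0 = 0 := by have := h2 0 0 (by decide) (by decide); linarith
  have h11 : M 1 1 = 0 := by have := h2 1 1 (by decide) (by decide); linarith
  have h22 : M 2 2 = 0 := by have := h2 2 2 (by decide) (by decide); linarith
  have h10 : M 1 0 = - M 0 1 := h2 1 0 (by decide) (by decide)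
  have h20 : M 2 0 = - M 0 2 := h2 2 0 (by decide) (by decide)
  have h21 : M 2 1 = - M 1 2 := h2 2 1 (by decide) (by decide)
  ext i j
  fin_cases i <;> fin_cases j <;>
    simp [PhiFun, Matrix.vecHead, Matrix.vecTail, cons_val_five', h00, h11, h22, h10, h20, h21, h1]

theorem PhiFun_inj (c : Fin 6 → ℝ) (h : PhiFun c = 0) : c = 0 := by
  funext k
  have e01 := congrFun (congrFun h 0) 1
  have e02 := congrFun (congrFun h 0) 2
  have e12 := congrFun (congrFun h 1) 2
  have e03 := congrFun (congrFun h 0) 3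
  have e13 := congrFun (congrFun h 1) 3
  have e23 := congrFun (congrFun h 2) 3
  simp [PhiFun, Matrix.vecHead, Matrix.vecTail] at e01 e02 e12 e03 e13 e23
  fin_cases k <;> simpa [Matrix.vecHead, Matrix.vecTail]

theorem range_Phi : LinearMap.range Phi = e3.toSubmodule := by
  ext M
  constructor
  · rintro ⟨c, rfl⟩
    exact PhiFun_mem c
  · intro hM
    exact ⟨![M 0 1, M 0 2, M 1 2, M 0 3, M 1 3, M 2 3], PhiFun_surj M hM⟩

theorem Phi_inj : Function.Injective Phi := by
  intro x y hxy
  have h0 : Phi (x - y) = 0 := by rw [map_sub, hxy, sub_self]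
  have := PhiFun_inj (x - y) h0
  exact sub_eq_zero.mp this

end AuxE3

/-- The Euclidean Lie algebra `e(3)` has no Lie subalgebra of dimension `5`. -/
theorem stmt9 (h : LieSubalgebra ℝ (Matrix (Fin 4) (Fin 4) ℝ)) (hsub : h ≤ e3) :
    Module.finrank ℝ ↥h ≠ 5 := by
  intro h5
  classical
  set K : Submodule ℝ (Fin 6 → ℝ) := (LieSubalgebra.toSubmodule h).comap Phi with hKdef
  have hsub' : LieSubalgebra.toSubmodule h ≤ LinearMap.range Phi := by
    rw [range_Phi]; exact hsub
  have hmapK : K.map Phi = LieSubalgebra.toSubmodule h := by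
    rw [hKdef, Submodule.map_comap_eq, range_Phi]
    exact inf_eq_right.mpr hsub
  have hfinK : Module.finrank ℝ K = 5 := by
    calc Module.finrank ℝ K
        = Module.finrank ℝ (K.map Phi) := (Submodule.equivMapOfInjective Phi Phi_inj K).finrank_eq
      _ = 5 := by rw [hmapK]; exact h5
  have hKtop : K ≠ ⊤ := by
    intro ht
    rw [ht] at hfinK
    rw [finrank_top] at hfinK
    simp [Module.finrank_pi] at hfinK
  obtain ⟨f, hf0, hfbot⟩ :=
    K.exists_dual_map_eq_bot_of_lt_top (lt_top_iff_ne_top.mpr hKtop) inferInstance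
  have hker : K ≤ LinearMap.ker f := by
    intro c hc
    have : f c ∈ K.map f := Submodule.mem_map_of_mem hc
    rw [hfbot] at this
    simpa using this
  have hrk := LinearMap.finrank_range_add_finrank_ker f
  have hVrank : Module.finrank ℝ (Fin 6 → ℝ) = 6 := by simp [Module.finrank_pi]
  have hrange_pos : 0 < Module.finrank ℝ (LinearMap.range f) := by
    rcases Nat.eq_zero_or_pos (Module.finrank ℝ (LinearMap.range f)) with h0 | hp
    · exfalso
      have : LinearMap.range f = ⊥ := Submodule.finrank_eq_zero.mp h0
      exact hf0 (LinearMap.range_eq_bot.mp this)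
    · exact hp
  have hKeq : K = LinearMap.ker f := by
    refine Submodule.eq_of_le_of_finrank_le hker ?_
    rw [hfinK]
    omega
  have hmem : ∀ c, f c = 0 → Phi c ∈ h := by
    intro c hc
    have : c ∈ K := by rw [hKeq]; exact LinearMap.mem_ker.mpr hc
    exact this
  have hcl : ∀ c d, f c = 0 → f d = 0 → f (br c d) = 0 := by
    intro c d hc hd
    have hb : Phi (br c d) ∈ h := by
      rw [← lie_Phi]; exact h.lie_mem (hmem c hc) (hmem d hd)
    exact hker (Submodule.mem_comap.mpr hb)
  set a : Fin 6 → ℝ := fun i => f (Pi.single i 1) with ha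
  have hfa : ∀ c : Fin 6 → ℝ,
      f c = a 0 * c 0 + a 1 * c 1 + a 2 * c 2 + a 3 * c 3 + a 4 * c 4 + a 5 * c 5 := by
    intro c
    have hc : c = ∑ i : Fin 6, c i • (Pi.single i (1 : ℝ) : Fin 6 → ℝ) := by
      funext j
      simp [Finset.sum_apply, Pi.single_apply, Fin.sum_univ_six]
    conv_lhs => rw [hc]
    rw [map_sum, Fin.sum_univ_six]
    simp only [LinearMap.map_smul, smul_eq_mul]
    ring
  -- kill the translation part
  have W0 := hcl ![0, 0, -(a 5 ^ 2 + a 4 ^ 2 + a 3 ^ 2), a 2 * a 3, a 2 * a 4, a 2 * a 5]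
      ![0, 0, 0, 0, a 5, -(a 4)]
      (by rw [hfa]; simp [Matrix.vecHead, Matrix.vecTail, Matrix.cons_val_succ, cons_val_five']; ring)
      (by rw [hfa]; simp [Matrix.vecHead, Matrix.vecTail, Matrix.cons_val_succ, cons_val_five']; ring)
  have W1 := hcl ![0, a 5 ^ 2 + a 4 ^ 2 + a 3 ^ 2, 0, -(a 1 * a 3), -(a 1 * a 4), -(a 1 * a 5)]
      ![0, 0, 0, -(a 5), 0, a 3]
      (by rw [hfa]; simp [Matrix.vecHead, Matrix.vecTail, Matrix.cons_val_succ, cons_val_five']; ring)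
      (by rw [hfa]; simp [Matrix.vecHead, Matrix.vecTail, Matrix.cons_val_succ, cons_val_five']; ring)
  have W2 := hcl ![-(a 5 ^ 2 + a 4 ^ 2 + a 3 ^ 2), 0, 0, a 0 * a 3, a 0 * a 4, a 0 * a 5]
      ![0, 0, 0, a 4, -(a 3), 0]
      (by rw [hfa]; simp [Matrix.vecHead, Matrix.vecTail, Matrix.cons_val_succ, cons_val_five']; ring)
      (by rw [hfa]; simp [Matrix.vecHead, Matrix.vecTail, Matrix.cons_val_succ, cons_val_five']; ring)
  rw [hfa] at W0 W1 W2
  simp only [br, Matrix.cons_val_zero, Matrix.cons_val_one, Matrix.head_cons,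
    Matrix.cons_val_two, Matrix.cons_val_three, Matrix.cons_val_four, cons_val_five',
    Matrix.cons_val_succ, Matrix.vecHead, Matrix.vecTail, Function.comp] at W0 W1 W2
  -- kill the rotation part
  have V0 := hcl ![a 1, -(a 0), 0, 0, 0, 0]
      ![-(a 0 * a 2), -(a 1 * a 2), a 1 ^ 2 + a 0 ^ 2, 0, 0, 0]
      (by rw [hfa]; simp [Matrix.vecHead, Matrix.vecTail, Matrix.cons_val_succ, cons_val_five']; ring)
      (by rw [hfa]; simp [Matrix.vecHead, Matrix.vecTail, Matrix.cons_val_succ, cons_val_five']; ring)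
  have V1 := hcl ![a 2, 0, -(a 0), 0, 0, 0]
      ![a 0 * a 1, -(a 2 ^ 2 + a 0 ^ 2), a 1 * a 2, 0, 0, 0]
      (by rw [hfa]; simp [Matrix.vecHead, Matrix.vecTail, Matrix.cons_val_succ, cons_val_five']; ring)
      (by rw [hfa]; simp [Matrix.vecHead, Matrix.vecTail, Matrix.cons_val_succ, cons_val_five']; ring)
  have V2 := hcl ![0, a 2, -(a 1), 0, 0, 0]
      ![a 2 ^ 2 + a 1 ^ 2, -(a 0 * a 1), -(a 0 * a 2), 0, 0, 0]
      (by rw [hfa]; simp [Matrix.vecHead, Matrix.vecTail, Matrix.cons_val_succ, cons_val_five']; ring)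
      (by rw [hfa]; simp [Matrix.vecHead, Matrix.vecTail, Matrix.cons_val_succ, cons_val_five']; ring)
  rw [hfa] at V0 V1 V2
  simp only [br, Matrix.cons_val_zero, Matrix.cons_val_one, Matrix.head_cons,
    Matrix.cons_val_two, Matrix.cons_val_three, Matrix.cons_val_four, cons_val_five',
    Matrix.cons_val_succ, Matrix.vecHead, Matrix.vecTail, Function.comp] at V0 V1 V2
  have hBsq : a 3 ^ 2 + a 4 ^ 2 + a 5 ^ 2 = 0 := by
    have hsq : (a 3 ^ 2 + a 4 ^ 2 + a 5 ^ 2) ^ 2 = 0 := by linear_combination (W0 + W1 + W2) / 2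
    exact pow_eq_zero_iff two_ne_zero |>.mp hsq
  have hAsq : a 0 ^ 2 + a 1 ^ 2 + a 2 ^ 2 = 0 := by
    have hsq : (a 0 ^ 2 + a 1 ^ 2 + a 2 ^ 2) ^ 2 = 0 := by linear_combination (V0 + V1 + V2) / 2
    exact pow_eq_zero_iff two_ne_zero |>.mp hsq
  have s0 := sq_nonneg (a 0); have s1 := sq_nonneg (a 1); have s2 := sq_nonneg (a 2)
  have s3 := sq_nonneg (a 3); have s4 := sq_nonneg (a 4); have s5 := sq_nonneg (a 5)
  have z0 : a 0 = 0 := sq_eq_zero_iff.mp (le_antisymm (by linarith) s0)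
  have z1 : a 1 = 0 := sq_eq_zero_iff.mp (le_antisymm (by linarith) s1)
  have z2 : a 2 = 0 := sq_eq_zero_iff.mp (le_antisymm (by linarith) s2)
  have z3 : a 3 = 0 := sq_eq_zero_iff.mp (le_antisymm (by linarith) s3)
  have z4 : a 4 = 0 := sq_eq_zero_iff.mp (le_antisymm (by linarith) s4)
  have z5 : a 5 = 0 := sq_eq_zero_iff.mp (le_antisymm (by linarith) s5)
  apply hf0
  apply LinearMap.ext
  intro c
  rw [hfa c]
  simp [z0, z1, z2, z3, z4, z5]
end

section
/- Let h be a Lie subalgebra of e(3) = so(3) ⋉ ℝ³ of dimension 4. Then h is isomorphic (as a Lie algebra, indeed conjugate under the Euclidean group) to the subalgebra spanned by the three translations ∂_x, ∂_y, ∂_z and one rotation x∂_y − y∂_x. -/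
open Matrix

attribute [local instance 100] LieRing.ofAssociativeRing

/-- Auxiliary: entries of a matrix in the standard subalgebra: translations
`∂_x, ∂_y, ∂_z` together with the rotation `x∂_y − y∂_x`. -/
def inStd (M : Matrix (Fin 4) (Fin 4) ℝ) : Prop :=
  inE3 M ∧ M 0 2 = 0 ∧ M 1 2 = 0

/-- The `4`-dimensional subalgebra of `e(3)` spanned by the translations
`∂_x, ∂_y, ∂_z` and the rotation `x∂_y − y∂_x`. -/
def stdSubalgebra : LieSubalgebra ℝ (Matrix (Fin 4) (Fin 4) ℝ) where
  carrier := {M | inStd M}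
  add_mem' := by
    rintro A B ⟨hA, hA02, hA12⟩ ⟨hB, hB02, hB12⟩
    exact ⟨e3.add_mem' hA hB, by simp [Matrix.add_apply, hA02, hB02],
      by simp [Matrix.add_apply, hA12, hB12]⟩
  zero_mem' := ⟨e3.zero_mem', rfl, rfl⟩
  smul_mem' := by
    rintro c A ⟨hA, hA02, hA12⟩
    exact ⟨e3.smul_mem' c hA, by simp [hA02], by simp [hA12]⟩
  lie_mem' := by
    rintro A B ⟨hA, hA02, hA12⟩ ⟨hB, hB02, hB12⟩
    have hAB := e3.lie_mem' hA hB
    refine ⟨hAB, ?_, ?_⟩ <;>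
    · show (A * B - B * A) _ _ = 0
      have hA00 : A 0 0 = 0 := by have := hA.2 0 0 (by decide) (by decide); linarith
      have hB00 : B 0 0 = 0 := by have := hB.2 0 0 (by decide) (by decide); linarith
      have hA11 : A 1 1 = 0 := by have := hA.2 1 1 (by decide) (by decide); linarith
      have hB11 : B 1 1 = 0 := by have := hB.2 1 1 (by decide) (by decide); linarith
      have hA32 : A 3 2 = 0 := hA.1 2
      have hB32 : B 3 2 = 0 := hB.1 2
      simp only [Matrix.sub_apply, Matrix.mul_apply]
      rw [Fin.sum_univ_four, Fin.sum_univ_four]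
      simp [hA00, hB00, hA11, hB11, hA02, hB02, hA12, hB12, hA32, hB32]
  
/-- An element of the Euclidean group inside `GL(4,ℝ)`: last row `(0,0,0,1)` and
orthogonal rotation block. -/
def isEucl (g : Matrix (Fin 4) (Fin 4) ℝ) : Prop :=
  (∀ j : Fin 4, g 3 j = if j = 3 then 1 else 0) ∧
  (∀ i j : Fin 4, i ≠ 3 → j ≠ 3 →
    (∑ k : Fin 3, g i k.castSucc * g j k.castSucc) = if i = j then 1 else 0)

section Aux

abbrev V4 := Matrix (Fin 4) (Fin 4) ℝ

lemma fin4cases (i : Fin 4) : i = 0 ∨ i = 1 ∨ i = 2 ∨ i = 3 := by omega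

lemma fin3cases (i : Fin 3) : i = 0 ∨ i = 1 ∨ i = 2 := by omega

def EE (α β γ p q r : ℝ) : V4 := !![0,-γ,β,p; γ,0,-α,q; -β,α,0,r; 0,0,0,0]

lemma EE_inE3 (α β γ p q r : ℝ) : inE3 (EE α β γ p q r) := by
  constructor
  · intro j; rcases fin4cases j with h|h|h|h <;> subst h <;> simp [EE, vecHead, vecTail]
  · intro i j hi hj
    rcases fin4cases i with h|h|h|h <;> subst h <;>
      rcases fin4cases j with h|h|h|h <;> subst h <;> simp_all [EE, vecHead, vecTail]

lemma eq_EE_of_inE3 {M : V4} (hM : inE3 M) :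
    M = EE (M 2 1) (M 0 2) (M 1 0) (M 0 3) (M 1 3) (M 2 3) := by
  obtain ⟨h1, h2⟩ := hM
  ext i j
  rcases fin4cases i with h|h|h|h <;> subst h <;>
    rcases fin4cases j with h|h|h|h <;> subst h <;>
    simp [EE, vecHead, vecTail] <;>
    first
      | rfl
      | (exact h1 _)
      | (have := h2 0 0 (by decide) (by decide); linarith)
      | (have := h2 1 1 (by decide) (by decide); linarith)
      | (have := h2 2 2 (by decide) (by decide); linarith)
      | (exact h2 0 1 (by decide) (by decide))
      | (exact h2 1 2 (by decide) (by decide))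
      | (exact h2 2 0 (by decide) (by decide))

set_option maxHeartbeats 1600000 in
lemma lie_EE (α β γ p q r α' β' γ' p' q' r' : ℝ) :
    ⁅EE α β γ p q r, EE α' β' γ' p' q' r'⁆ =
      EE (β*γ' - γ*β') (γ*α' - α*γ') (α*β' - β*α')
        (β*r' - γ*q' - (β'*r - γ'*q)) (γ*p' - α*r' - (γ'*p - α'*r))
        (α*q' - β*p' - (α'*q - β'*p)) := by
  ext i j
  rcases fin4cases i with h|h|h|h <;> subst h <;>
    rcases fin4cases j with h|h|h|h <;> subst h <;>
    (simp only [Ring.lie_def, Matrix.sub_apply, Matrix.mul_apply, Fin.sum_univ_four];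
     simp [EE, vecHead, vecTail]) <;> ring

def axL : V4 →ₗ[ℝ] (Fin 3 → ℝ) where
  toFun M := ![M 2 1, M 0 2, M 1 0]
  map_add' A B := by funext i; rcases fin3cases i with h|h|h <;> subst h <;> simp
  map_smul' c A := by funext i; rcases fin3cases i with h|h|h <;> subst h <;> simp

def trL : V4 →ₗ[ℝ] (Fin 3 → ℝ) where
  toFun M := ![M 0 3, M 1 3, M 2 3]
  map_add' A B := by funext i; rcases fin3cases i with h|h|h <;> subst h <;> simp
  map_smul' c A := by funext i; rcases fin3cases i with h|h|h <;> subst h <;> simp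

lemma axL_EE (α β γ p q r : ℝ) : axL (EE α β γ p q r) = ![α, β, γ] := by
  funext i; rcases fin3cases i with h|h|h <;> subst h <;> simp [axL, EE, vecHead, vecTail]

lemma trL_EE (α β γ p q r : ℝ) : trL (EE α β γ p q r) = ![p, q, r] := by
  funext i; rcases fin3cases i with h|h|h <;> subst h <;> simp [trL, EE, vecHead, vecTail]

lemma axL_lie {A B : V4} (hA : inE3 A) (hB : inE3 B) :
    axL ⁅A, B⁆ = crossProduct (axL A) (axL B) := by
  conv_lhs => rw [eq_EE_of_inE3 hA, eq_EE_of_inE3 hB]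
  rw [lie_EE, axL_EE]
  funext i
  rcases fin3cases i with h|h|h <;> subst h <;>
    simp [axL, crossProduct, eq_EE_of_inE3, vecHead, vecTail] <;> ring

lemma trL_lie {A B : V4} (hA : inE3 A) (hB : inE3 B) :
    trL ⁅A, B⁆ = crossProduct (axL A) (trL B) - crossProduct (axL B) (trL A) := by
  conv_lhs => rw [eq_EE_of_inE3 hA, eq_EE_of_inE3 hB]
  rw [lie_EE, trL_EE]
  funext i
  rcases fin3cases i with h|h|h <;> subst h <;>
    simp [axL, trL, crossProduct, vecHead, vecTail] <;> ring

def Gz (x y : ℝ) : V4 := !![x, y, 0, 0; -y, x, 0, 0; 0, 0, 1, 0; 0, 0, 0, 1]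
def Gy (z w : ℝ) : V4 := !![z, 0, -w, 0; 0, 1, 0, 0; w, 0, z, 0; 0, 0, 0, 1]

lemma Gz_mul_inv {x y : ℝ} (h : x^2 + y^2 = 1) : Gz x y * Gz x (-y) = 1 := by
  ext i j
  rcases fin4cases i with hh|hh|hh|hh <;> subst hh <;>
    rcases fin4cases j with hh|hh|hh|hh <;> subst hh <;>
    (simp only [Matrix.mul_apply, Fin.sum_univ_four];
     simp [Gz, Matrix.one_apply, vecHead, vecTail]) <;>
    first
      | ring1
      | linear_combination h
      | linear_combination -h

lemma Gy_mul_inv {z w : ℝ} (h : z^2 + w^2 = 1) : Gy z w * Gy z (-w) = 1 := by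
  ext i j
  rcases fin4cases i with hh|hh|hh|hh <;> subst hh <;>
    rcases fin4cases j with hh|hh|hh|hh <;> subst hh <;>
    (simp only [Matrix.mul_apply, Fin.sum_univ_four];
     simp [Gy, Matrix.one_apply, vecHead, vecTail]) <;>
    first
      | ring1
      | linear_combination h
      | linear_combination -h

lemma Gz_conj {x y : ℝ} (h : x^2 + y^2 = 1) (α β γ p q r : ℝ) :
    Gz x y * EE α β γ p q r * Gz x (-y) =
      EE (x*α + y*β) (-y*α + x*β) γ (x*p + y*q) (-y*p + x*q) r := by
  ext i j
  rcases fin4cases i with hh|hh|hh|hh <;> subst hh <;>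
    rcases fin4cases j with hh|hh|hh|hh <;> subst hh <;>
    (simp only [Matrix.mul_apply, Fin.sum_univ_four];
     simp [Gz, EE, vecHead, vecTail]) <;>
    first
      | ring1
      | linear_combination (-γ) * h
      | linear_combination γ * h

lemma Gy_conj {z w : ℝ} (h : z^2 + w^2 = 1) (α β γ p q r : ℝ) :
    Gy z w * EE α β γ p q r * Gy z (-w) =
      EE (z*α - w*γ) β (w*α + z*γ) (z*p - w*r) q (w*p + z*r) := by
  ext i j
  rcases fin4cases i with hh|hh|hh|hh <;> subst hh <;>
    rcases fin4cases j with hh|hh|hh|hh <;> subst hh <;>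
    (simp only [Matrix.mul_apply, Fin.sum_univ_four];
     simp [Gy, EE, vecHead, vecTail]) <;>
    first
      | ring1
      | linear_combination β * h
      | linear_combination (-β) * h

lemma Gy_mul_Gz (z w x y : ℝ) :
    Gy z w * Gz x y = !![z*x, z*y, -w, 0; -y, x, 0, 0; w*x, w*y, z, 0; 0, 0, 0, 1] := by
  ext i j
  rcases fin4cases i with hh|hh|hh|hh <;> subst hh <;>
    rcases fin4cases j with hh|hh|hh|hh <;> subst hh <;>
    (simp only [Matrix.mul_apply, Fin.sum_univ_four];
     simp [Gy, Gz, vecHead, vecTail]) <;> ring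


lemma mem_e3_iff {M : V4} : M ∈ e3 ↔ inE3 M := Iff.rfl
lemma mem_std_iff {M : V4} : M ∈ stdSubalgebra ↔ inStd M := Iff.rfl

def inT (M : V4) : Prop := ∀ i j : Fin 4, i = 3 ∨ j ≠ 3 → M i j = 0

def Tsub : Submodule ℝ V4 where
  carrier := {M | inT M}
  add_mem' := by rintro A B hA hB i j hij; simp [Matrix.add_apply, hA i j hij, hB i j hij]
  zero_mem' := by intro i j hij; rfl
  smul_mem' := by rintro c A hA i j hij; simp [Matrix.smul_apply, hA i j hij]

lemma inT_EE (p q r : ℝ) : inT (EE 0 0 0 p q r) := by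
  intro i j hij
  rcases fin4cases i with hh|hh|hh|hh <;> subst hh <;>
    rcases fin4cases j with hh|hh|hh|hh <;> subst hh <;>
    simp_all [EE, vecHead, vecTail]

lemma axL_apply (M : V4) : axL M = ![M 2 1, M 0 2, M 1 0] := rfl
lemma trL_apply (M : V4) : trL M = ![M 0 3, M 1 3, M 2 3] := rfl

lemma inT_of_inE3_ax {M : V4} (hM : inE3 M) (h0 : axL M = 0) : inT M := by
  have e0 : M 2 1 = 0 := by simpa [axL_apply] using congr_fun h0 0
  have e1 : M 0 2 = 0 := by simpa [axL_apply] using congr_fun h0 1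
  have e2 : M 1 0 = 0 := by simpa [axL_apply] using congr_fun h0 2
  intro i j hij
  rcases fin4cases i with hh|hh|hh|hh <;> subst hh <;>
    rcases fin4cases j with hh|hh|hh|hh <;> subst hh <;>
    first
      | (exact hM.1 _)
      | (exact absurd hij (by decide))
      | (have := hM.2 0 0 (by decide) (by decide); linarith)
      | (have := hM.2 1 1 (by decide) (by decide); linarith)
      | (have := hM.2 2 2 (by decide) (by decide); linarith)
      | (rw [hM.2 0 1 (by decide) (by decide), e2, neg_zero])
      | (rw [hM.2 1 2 (by decide) (by decide), e0, neg_zero])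
      | (rw [hM.2 2 0 (by decide) (by decide), e1, neg_zero])
      | exact e0
      | exact e1
      | exact e2

lemma inT_inE3 {M : V4} (h : inT M) : inE3 M := by
  constructor
  · intro j; exact h 3 j (Or.inl rfl)
  · intro i j hi hj
    rw [h i j (Or.inr hj), h j i (Or.inr hi), neg_zero]

lemma eq_zero_of_inT_trL {M : V4} (hT : inT M) (h0 : trL M = 0) : M = 0 := by
  have e0 : M 0 3 = 0 := by simpa [trL_apply] using congr_fun h0 0
  have e1 : M 1 3 = 0 := by simpa [trL_apply] using congr_fun h0 1
  have e2 : M 2 3 = 0 := by simpa [trL_apply] using congr_fun h0 2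
  ext i j
  rcases fin4cases i with hh|hh|hh|hh <;> subst hh <;>
    rcases fin4cases j with hh|hh|hh|hh <;> subst hh <;>
    simp only [Matrix.zero_apply] <;>
    first
      | exact e0
      | exact e1
      | exact e2
      | exact hT _ _ (Or.inl rfl)
      | exact hT _ _ (Or.inr (by decide))

lemma finrank_Tsub : Module.finrank ℝ ↥Tsub = 3 := by
  let f3 : ↥Tsub →ₗ[ℝ] (Fin 3 → ℝ) := trL.comp Tsub.subtype
  have hinj : Function.Injective f3 := by
    intro x y hxy
    apply Subtype.ext
    have hx : trL ((x : V4) - y) = 0 := by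
      rw [map_sub, sub_eq_zero]; exact hxy
    have := eq_zero_of_inT_trL (M := (x : V4) - (y : V4))
      (Tsub.sub_mem x.2 y.2) hx
    exact sub_eq_zero.mp this
  have hsurj : Function.Surjective f3 := by
    intro t
    refine ⟨⟨EE 0 0 0 (t 0) (t 1) (t 2), inT_EE _ _ _⟩, ?_⟩
    show trL (EE 0 0 0 (t 0) (t 1) (t 2)) = t
    rw [trL_EE]
    funext i; rcases fin3cases i with hh|hh|hh <;> subst hh <;> simp [vecHead, vecTail]
  rw [LinearEquiv.finrank_eq (LinearEquiv.ofBijective f3 ⟨hinj, hsurj⟩),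
    Module.finrank_fin_fun]

lemma cross_colinear {u v : Fin 3 → ℝ} (hu : u ≠ 0) (h : crossProduct u v = 0) :
    ∃ k : ℝ, v = k • u := by
  have h0 : u 1 * v 2 - u 2 * v 1 = 0 := by have := congr_fun h 0; rw [cross_apply] at this; simpa using this
  have h1 : u 2 * v 0 - u 0 * v 2 = 0 := by have := congr_fun h 1; rw [cross_apply] at this; simpa using this
  have h2 : u 0 * v 1 - u 1 * v 0 = 0 := by have := congr_fun h 2; rw [cross_apply] at this; simpa using this
  have hex : ∃ i, u i ≠ 0 := by
    by_contra hc; push_neg at hc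
    exact hu (funext fun i => hc i)
  obtain ⟨i, hi⟩ := hex
  refine ⟨v i / u i, funext fun j => ?_⟩
  have : ((v i / u i) • u) j = v i / u i * u j := rfl
  rw [this]
  rcases fin3cases i with hh|hh|hh <;> subst hh <;>
    rcases fin3cases j with hh|hh|hh <;> subst hh <;>
    field_simp <;>
    first
      | ring1
      | linear_combination h0
      | linear_combination -h0
      | linear_combination h1
      | linear_combination -h1
      | linear_combination h2
      | linear_combination -h2
      | linear_combination v 0 * h0
      | linear_combination v 1 * h1
      | linear_combination v 2 * h2

lemma cross_dot (u v : Fin 3 → ℝ) : crossProduct u v ⬝ᵥ v = 0 := by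
  simp [cross_apply, dotProduct, Fin.sum_univ_three, vecHead, vecTail] <;> ring1

lemma span_top_of_cross {W : Submodule ℝ (Fin 3 → ℝ)} {u v : Fin 3 → ℝ}
    (hu : u ∈ W) (hv : v ∈ W) (hw : crossProduct u v ∈ W)
    (hnz : crossProduct u v ≠ 0) : W = ⊤ := by
  set w : Fin 3 → ℝ := crossProduct u v with hwdef
  set P : Matrix (Fin 3) (Fin 3) ℝ := Matrix.of ![u, v, w] with hPdef
  have hdet : P.det = w ⬝ᵥ w := by
    rw [Matrix.det_fin_three]
    simp only [hPdef, hwdef, cross_apply, Matrix.of_apply, Matrix.cons_val', Matrix.cons_val_zero,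
      Matrix.cons_val_one, Matrix.head_cons, Matrix.empty_val', Matrix.cons_val_fin_one,
      Matrix.head_fin_const, dotProduct, Fin.sum_univ_three, Matrix.cons_val_two,
      Matrix.vecHead, Matrix.vecTail, Matrix.cons_val_succ, Function.comp_apply, Fin.succ_zero_eq_one,
      Fin.succ_one_eq_two]
    ring1
  have hw0 : w ⬝ᵥ w ≠ 0 := fun hh => hnz (dotProduct_self_eq_zero.mp hh)
  have hunit : IsUnit P.det := by rw [hdet]; exact isUnit_iff_ne_zero.mpr hw0
  rw [eq_top_iff]
  intro t _
  have hx : t = (t ᵥ* P⁻¹) ᵥ* P := by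
    rw [Matrix.vecMul_vecMul, Matrix.nonsing_inv_mul P hunit, Matrix.vecMul_one]
  have expand : ∀ y : Fin 3 → ℝ, y ᵥ* P = y 0 • u + y 1 • v + y 2 • w := by
    intro y; funext j
    simp only [Matrix.vecMul, dotProduct, Fin.sum_univ_three, hPdef, Matrix.of_apply,
      Matrix.cons_val', Matrix.cons_val_zero, Matrix.cons_val_one, Matrix.head_cons,
      Matrix.empty_val', Matrix.cons_val_fin_one, Matrix.head_fin_const, Matrix.cons_val_two,
      Matrix.vecHead, Matrix.vecTail, Matrix.cons_val_succ, Function.comp_apply, Pi.add_apply, Pi.smul_apply,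
      smul_eq_mul]
    try ring1
  rw [hx, expand]
  exact add_mem (add_mem (W.smul_mem _ hu) (W.smul_mem _ hv)) (W.smul_mem _ hw)

lemma equiv_of_conj (h k : LieSubalgebra ℝ V4) (g : V4ˣ)
    (hme : ∀ M : V4, M ∈ h ↔ (g : V4) * M * ((g⁻¹ : V4ˣ) : V4) ∈ k) :
    Nonempty (↥h ≃ₗ⁅ℝ⁆ ↥k) := by
  set gg : V4 := (g : V4) with hggdef
  set gi : V4 := ((g⁻¹ : V4ˣ) : V4) with hgidef
  have hgg1 : gg * gi = 1 := Units.mul_inv g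
  have hgi1 : gi * gg = 1 := Units.inv_mul g
  have hmid : ∀ t : V4, gi * (gg * t) = t := by
    intro t; rw [← mul_assoc, hgi1, one_mul]
  have hmid' : ∀ t : V4, gg * (gi * t) = t := by
    intro t; rw [← mul_assoc, hgg1, one_mul]
  have hback : ∀ N : V4, gg * (gi * N * gg) * gi = N := by
    intro N
    simp only [← mul_assoc]
    rw [hgg1, one_mul, mul_assoc, hgg1, mul_one]
  have hmem' : ∀ N : V4, N ∈ k → gi * N * gg ∈ h := by
    intro N hN
    rw [hme, hback]
    exact hN
  exact ⟨{
    toFun := fun x => (⟨gg * (x : V4) * gi, (hme _).mp x.2⟩ : ↥k)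
    map_add' := by
      intro x y; apply Subtype.ext
      show gg * ((x : V4) + (y : V4)) * gi = gg * (x : V4) * gi + gg * (y : V4) * gi
      rw [mul_add, add_mul]
    map_smul' := by
      intro c x; apply Subtype.ext
      show gg * (c • (x : V4)) * gi = c • (gg * (x : V4) * gi)
      rw [mul_smul_comm, smul_mul_assoc]
    map_lie' := by
      intro x y; apply Subtype.ext
      show gg * ⁅(x : V4), (y : V4)⁆ * gi
        = ⁅gg * (x : V4) * gi, gg * (y : V4) * gi⁆
      simp only [Ring.lie_def, mul_sub, sub_mul, mul_assoc, hmid]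
    invFun := fun y => (⟨gi * (y : V4) * gg, hmem' _ y.2⟩ : ↥h)
    left_inv := by
      intro x; apply Subtype.ext
      show gi * (gg * (x : V4) * gi) * gg = (x : V4)
      simp only [mul_assoc, hgi1, mul_one]
      exact hmid _
    right_inv := by
      intro y; apply Subtype.ext
      show gg * (gi * (y : V4) * gg) * gi = (y : V4)
      exact hback _ }⟩

lemma unit_xy {a b s : ℝ} (hs : s ≠ 0) (h2 : s^2 = a^2 + b^2) :
    (a/s)^2 + (b/s)^2 = 1 := by
  field_simp
  first
    | linear_combination h2
    | linear_combination -h2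

lemma unit_zw {a b c s n : ℝ} (hn : n ≠ 0) (h2 : s^2 = a^2 + b^2)
    (h3 : n^2 = a^2 + b^2 + c^2) : (c/n)^2 + (s/n)^2 = 1 := by
  field_simp
  first
    | linear_combination h2 - h3
    | linear_combination h3 - h2
    | linear_combination h2 + h3
    | linear_combination - h2 - h3

lemma rotA_aux {a b c s n : ℝ} (k : ℝ) (hs : s ≠ 0) (hn : n ≠ 0)
    (h2 : s^2 = a^2 + b^2) :
    (c/n)*((a/s)*(k*a) + (b/s)*(k*b)) - (s/n)*(k*c) = 0 := by
  rw [sub_eq_zero]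
  field_simp
  first
    | linear_combination (k*c) * h2
    | linear_combination (-(k*c)) * h2
    | linear_combination (k*c*n) * h2
    | linear_combination (-(k*c*n)) * h2
    | linear_combination (k*c*s) * h2
    | linear_combination (-(k*c*s)) * h2
    | linear_combination (k*c*s*n) * h2
    | linear_combination (-(k*c*s*n)) * h2

lemma comp0_aux {a b c s n g : ℝ} (hs : s ≠ 0) (hn : n ≠ 0) :
    g/n * a = (a/s)*((c/n)*0 + (s/n)*g) - (b/s)*0 := by
  field_simp
  ring1

lemma comp1_aux {a b c s n g : ℝ} (hs : s ≠ 0) (hn : n ≠ 0) :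
    g/n * b = (b/s)*((c/n)*0 + (s/n)*g) + (a/s)*0 := by
  field_simp
  ring1

lemma comp2_aux {c s n g : ℝ} (hn : n ≠ 0) :
    g/n * c = -(s/n)*0 + (c/n)*g := by
  field_simp
  ring1

lemma isEucl_one : isEucl (1 : V4) := by
  constructor
  · intro j
    rcases fin4cases j with hh|hh|hh|hh <;> subst hh <;> simp [Matrix.one_apply]
  · intro i j hi hj
    rcases fin4cases i with hh|hh|hh|hh <;> subst hh <;>
      rcases fin4cases j with hh|hh|hh|hh <;> subst hh <;>
      first
        | (exact absurd rfl hi)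
        | (exact absurd rfl hj)
        | (simp [Fin.sum_univ_three, Matrix.one_apply,
            show ((0:Fin 3).castSucc) = (0:Fin 4) from rfl,
            show ((1:Fin 3).castSucc) = (1:Fin 4) from rfl,
            show ((2:Fin 3).castSucc) = (2:Fin 4) from rfl])

lemma isEucl_rot {x y z w : ℝ} (hxy : x^2 + y^2 = 1) (hzw : z^2 + w^2 = 1) :
    isEucl !![z*x, z*y, -w, 0; -y, x, 0, 0; w*x, w*y, z, 0; 0, 0, 0, 1] := by
  constructor
  · intro j
    rcases fin4cases j with hh|hh|hh|hh <;> subst hh <;> simp [vecHead, vecTail]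
  · intro i j hi hj
    rcases fin4cases i with hh|hh|hh|hh <;> subst hh <;>
      rcases fin4cases j with hh|hh|hh|hh <;> subst hh <;>
      first
        | (exact absurd rfl hi)
        | (exact absurd rfl hj)
        | ((simp [Fin.sum_univ_three, vecHead, vecTail,
            show ((0:Fin 3).castSucc) = (0:Fin 4) from rfl,
            show ((1:Fin 3).castSucc) = (1:Fin 4) from rfl,
            show ((2:Fin 3).castSucc) = (2:Fin 4) from rfl]) <;>
          first
            | ring1
            | linear_combination z^2 * hxy + hzw
            | linear_combination (-(z^2)) * hxy - hzw
            | linear_combination z*w*hxy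
            | linear_combination (-(z*w))*hxy
            | linear_combination hxy
            | linear_combination -hxy
            | linear_combination w^2*hxy + hzw
            | linear_combination (-(w^2))*hxy - hzw)

end Aux

set_option maxHeartbeats 3000000 in
/-- Every `4`-dimensional Lie subalgebra of `e(3)` is conjugate under the Euclidean
group (in particular isomorphic as a Lie algebra) to the subalgebra spanned by the
translations `∂_x, ∂_y, ∂_z` and the rotation `x∂_y − y∂_x`. -/
theorem stmt10 (h : LieSubalgebra ℝ (Matrix (Fin 4) (Fin 4) ℝ)) (hsub : h ≤ e3)
    (hdim : Module.finrank ℝ ↥h = 4) :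
    (∃ g : (Matrix (Fin 4) (Fin 4) ℝ)ˣ, isEucl (g : Matrix (Fin 4) (Fin 4) ℝ) ∧
      ∀ M, M ∈ h ↔
        (g : Matrix (Fin 4) (Fin 4) ℝ) * M * ((g⁻¹ : _) : Matrix (Fin 4) (Fin 4) ℝ)
          ∈ stdSubalgebra) ∧
    Nonempty (↥h ≃ₗ⁅ℝ⁆ ↥stdSubalgebra) := by
  classical
  have he3 : ∀ {M : V4}, M ∈ h → inE3 M := fun {M} hM => hsub hM
  set hS : Submodule ℝ V4 := h.toSubmodule with hSdef
  have hmemS : ∀ {M : V4}, M ∈ hS ↔ M ∈ h := fun {M} => h.mem_toSubmodule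
  set f : ↥hS →ₗ[ℝ] (Fin 3 → ℝ) := axL.comp hS.subtype with hfdef
  have hfx : ∀ x : ↥hS, f x = axL (x : V4) := fun _ => rfl
  have hrk : Module.finrank ℝ ↥(LinearMap.range f)
      + Module.finrank ℝ ↥(LinearMap.ker f) = 4 := by
    rw [LinearMap.finrank_range_add_finrank_ker f]; exact hdim
  have hkmem : ∀ x : ↥hS, x ∈ LinearMap.ker f → inT (x : V4) := by
    intro x hx
    exact inT_of_inE3_ax (he3 (hmemS.mp x.2)) (by rw [← hfx]; exact hx)
  have hker_le : Module.finrank ℝ ↥(LinearMap.ker f) ≤ 3 := by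
    have hle := LinearMap.finrank_le_finrank_of_injective
      (f := LinearMap.codRestrict Tsub ((hS.subtype).comp (LinearMap.ker f).subtype)
        (fun x => hkmem x.1 x.2))
      (by
        intro x y hxy
        apply Subtype.ext; apply Subtype.ext
        have := congrArg (Subtype.val) hxy
        exact this)
    rw [finrank_Tsub] at hle
    exact hle
  have hcl : ∀ u, u ∈ LinearMap.range f → ∀ v, v ∈ LinearMap.range f →
      crossProduct u v ∈ LinearMap.range f := by
    rintro u ⟨x, rfl⟩ v ⟨yy, rfl⟩
    refine ⟨⟨⁅(x : V4), (yy : V4)⁆,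
      hmemS.mpr (h.lie_mem (hmemS.mp x.2) (hmemS.mp yy.2))⟩, ?_⟩
    rw [hfx, hfx, hfx]
    exact axL_lie (he3 (hmemS.mp x.2)) (he3 (hmemS.mp yy.2))
  by_cases hall : ∀ u ∈ LinearMap.range f, ∀ v ∈ LinearMap.range f, crossProduct u v = 0
  · -- main case : the rotation part is one–dimensional
    have hWne : LinearMap.range f ≠ ⊥ := by
      intro hb
      rw [hb, finrank_bot] at hrk
      omega
    obtain ⟨u, huW, hu0⟩ := (Submodule.ne_bot_iff _).mp hWne
    have hWspan : LinearMap.range f = Submodule.span ℝ {u} := by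
      apply le_antisymm
      · intro v hv
        obtain ⟨k, hk⟩ := cross_colinear hu0 (hall u huW v hv)
        rw [hk]
        exact Submodule.smul_mem _ _ (Submodule.mem_span_singleton_self u)
      · rw [Submodule.span_le, Set.singleton_subset_iff]
        exact huW
    have hfr1 : Module.finrank ℝ ↥(LinearMap.range f) = 1 := by
      rw [hWspan]; exact finrank_span_singleton hu0
    have hker3 : Module.finrank ℝ ↥(LinearMap.ker f) = 3 := by omega
    -- all translations belong to h
    have hT_le : ∀ {M : V4}, inT M → M ∈ h := by
      have hmap : (LinearMap.ker f).map hS.subtype = Tsub := by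
        apply Submodule.eq_of_le_of_finrank_le
        · rintro _ ⟨x, hx, rfl⟩
          exact hkmem x hx
        · rw [finrank_Tsub, Submodule.finrank_map_subtype_eq, hker3]
      intro M hM
      have : M ∈ (LinearMap.ker f).map hS.subtype := by rw [hmap]; exact hM
      obtain ⟨x, _, rfl⟩ := this
      exact hmemS.mp x.2
    obtain ⟨xA, hxA⟩ := huW
    have hAh : (xA : V4) ∈ h := hmemS.mp xA.2
    have hAx : axL (xA : V4) = u := by rw [← hfx]; exact hxA
    -- characterisation of h
    have hchar : ∀ M : V4, M ∈ h ↔ inE3 M ∧ axL M ∈ Submodule.span ℝ {u} := by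
      intro M
      constructor
      · intro hM
        refine ⟨he3 hM, ?_⟩
        rw [← hWspan]
        exact ⟨⟨M, hmemS.mpr hM⟩, rfl⟩
      · rintro ⟨hE, hax⟩
        obtain ⟨k, hk⟩ := Submodule.mem_span_singleton.mp hax
        have hsubE : inE3 (M - k • (xA : V4)) := by
          have := e3.toSubmodule.sub_mem (mem_e3_iff.mpr hE)
            (e3.toSubmodule.smul_mem k (mem_e3_iff.mpr (he3 hAh)))
          exact mem_e3_iff.mp this
        have haxz : axL (M - k • (xA : V4)) = 0 := by
          rw [map_sub, LinearMap.map_smul, hAx, ← hk, sub_self]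
        have hMmem : M - k • (xA : V4) ∈ h := hT_le (inT_of_inE3_ax hsubE haxz)
        have : M = (M - k • (xA : V4)) + k • (xA : V4) := by abel
        rw [this]
        exact h.add_mem hMmem (h.smul_mem k hAh)
    -- now build the group element
    set a : ℝ := u 0 with hadef
    set b : ℝ := u 1 with hbdef
    set c : ℝ := u 2 with hcdef
    have hu_eq : u = ![a, b, c] := by
      funext i; rcases fin3cases i with hh|hh|hh <;> subst hh <;> rfl
    by_cases hab : a = 0 ∧ b = 0
    · -- axis already vertical : g = 1
      have hc0 : c ≠ 0 := by
        intro hcc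
        apply hu0
        rw [hu_eq, hab.1, hab.2, hcc]
        funext i; rcases fin3cases i with hh|hh|hh <;> subst hh <;> rfl
      have hiff : ∀ M : V4, M ∈ h ↔
          ((1 : V4ˣ) : V4) * M * (((1 : V4ˣ)⁻¹ : V4ˣ) : V4) ∈ stdSubalgebra := by
        intro M
        rw [inv_one]
        simp only [Units.val_one, one_mul, mul_one]
        rw [hchar, mem_std_iff]
        constructor
        · rintro ⟨hE, hax⟩
          obtain ⟨k, hk⟩ := Submodule.mem_span_singleton.mp hax
          rw [hu_eq, hab.1, hab.2] at hk
          have e0 : M 2 1 = 0 := by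
            have := congr_fun hk 0
            simpa [axL_apply] using this.symm
          have e1 : M 0 2 = 0 := by
            have := congr_fun hk 1
            simpa [axL_apply] using this.symm
          refine ⟨hE, e1, ?_⟩
          rw [hE.2 1 2 (by decide) (by decide), e0, neg_zero]
        · rintro ⟨hE, h02, h12⟩
          refine ⟨hE, ?_⟩
          have e0 : M 2 1 = 0 := by
            have := hE.2 1 2 (by decide) (by decide)
            rw [h12] at this; linarith
          rw [Submodule.mem_span_singleton]
          refine ⟨M 1 0 / c, ?_⟩
          rw [hu_eq, hab.1, hab.2, axL_apply, e0, h02]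
          funext i; rcases fin3cases i with hh|hh|hh <;> subst hh <;>
            simp [vecHead, vecTail] <;> field_simp
      exact ⟨⟨1, isEucl_one, hiff⟩, equiv_of_conj h stdSubalgebra 1 hiff⟩
    · -- general axis
      have hab2 : 0 < a^2 + b^2 := by
        rcases not_and_or.mp hab with hh|hh
        · have := mul_self_pos.mpr hh; nlinarith [sq_nonneg b]
        · have := mul_self_pos.mpr hh; nlinarith [sq_nonneg a]
      have habc2 : 0 < a^2 + b^2 + c^2 := by linarith [sq_nonneg c]
      set s : ℝ := Real.sqrt (a^2 + b^2) with hsdef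
      set n : ℝ := Real.sqrt (a^2 + b^2 + c^2) with hndef
      have hs2 : s^2 = a^2 + b^2 := Real.sq_sqrt (le_of_lt hab2)
      have hn2 : n^2 = a^2 + b^2 + c^2 := Real.sq_sqrt (le_of_lt habc2)
      have hspos : 0 < s := Real.sqrt_pos.mpr hab2
      have hnpos : 0 < n := Real.sqrt_pos.mpr habc2
      have hsne : s ≠ 0 := ne_of_gt hspos
      have hnne : n ≠ 0 := ne_of_gt hnpos
      set x : ℝ := a / s with hxdef
      set y : ℝ := b / s with hydef
      set z : ℝ := c / n with hzdef
      set w : ℝ := s / n with hwdef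
      have hxy : x^2 + y^2 = 1 := by
        rw [hxdef, hydef]; exact unit_xy hsne hs2
      have hzw : z^2 + w^2 = 1 := by
        rw [hzdef, hwdef]; exact unit_zw hnne hs2 hn2
      have hxy' : x^2 + (-y)^2 = 1 := by linear_combination hxy
      have hzw' : z^2 + (-w)^2 = 1 := by linear_combination hzw
      set gv : V4 := Gy z w * Gz x y with hgvdef
      set gi : V4 := Gz x (-y) * Gy z (-w) with hgidef2
      have hgg1 : gv * gi = 1 := by
        rw [hgvdef, hgidef2]
        calc Gy z w * Gz x y * (Gz x (-y) * Gy z (-w))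
            = Gy z w * (Gz x y * Gz x (-y)) * Gy z (-w) := by
              simp only [mul_assoc]
          _ = 1 := by rw [Gz_mul_inv hxy, mul_one, Gy_mul_inv hzw]
      have hgi1 : gi * gv = 1 := by
        rw [hgvdef, hgidef2]
        calc Gz x (-y) * Gy z (-w) * (Gy z w * Gz x y)
            = Gz x (-y) * (Gy z (-w) * Gy z w) * Gz x y := by
              simp only [mul_assoc]
          _ = 1 := by
              have h1 : Gy z (-w) * Gy z w = 1 := by
                have := Gy_mul_inv hzw'
                rw [neg_neg] at this
                exact this
              have h2 : Gz x (-y) * Gz x y = 1 := by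
                have := Gz_mul_inv hxy'
                rw [neg_neg] at this
                exact this
              rw [h1, mul_one, h2]
      set G : V4ˣ := ⟨gv, gi, hgg1, hgi1⟩ with hGdef
      have hGinv : ((G⁻¹ : V4ˣ) : V4) = gi := rfl
      -- conjugation formula
      have hconj : ∀ α β γ p q r : ℝ,
          gv * EE α β γ p q r * gi =
            EE (z*(x*α + y*β) - w*γ) (-y*α + x*β) (w*(x*α + y*β) + z*γ)
              (z*(x*p + y*q) - w*r) (-y*p + x*q) (w*(x*p + y*q) + z*r) := by
        intro α β γ p q r
        rw [hgvdef, hgidef2]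
        calc Gy z w * Gz x y * EE α β γ p q r * (Gz x (-y) * Gy z (-w))
            = Gy z w * (Gz x y * EE α β γ p q r * Gz x (-y)) * Gy z (-w) := by
              simp only [mul_assoc]
          _ = _ := by rw [Gz_conj hxy, Gy_conj hzw]
      have hconj' : ∀ α β γ p q r : ℝ,
          gi * EE α β γ p q r * gv =
            EE (x*(z*α + w*γ) - y*β) (y*(z*α + w*γ) + x*β) (-w*α + z*γ)
              (x*(z*p + w*r) - y*q) (y*(z*p + w*r) + x*q) (-w*p + z*r) := by
        intro α β γ p q r
        rw [hgvdef, hgidef2]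
        have hGy : Gy z (-w) * EE α β γ p q r * Gy z w =
            EE (z*α + w*γ) β (-w*α + z*γ) (z*p + w*r) q (-w*p + z*r) := by
          have := Gy_conj hzw' α β γ p q r
          rw [neg_neg] at this
          rw [this]
          congr 1 <;> ring
        have hGz : ∀ α' β' γ' p' q' r' : ℝ, Gz x (-y) * EE α' β' γ' p' q' r' * Gz x y =
            EE (x*α' - y*β') (y*α' + x*β') γ' (x*p' - y*q') (y*p' + x*q') r' := by
          intro α' β' γ' p' q' r'
          have := Gz_conj hxy' α' β' γ' p' q' r'
          rw [neg_neg] at this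
          rw [this]
          congr 1 <;> ring
        calc Gz x (-y) * Gy z (-w) * EE α β γ p q r * (Gy z w * Gz x y)
            = Gz x (-y) * (Gy z (-w) * EE α β γ p q r * Gy z w) * Gz x y := by
              simp only [mul_assoc]
          _ = _ := by rw [hGy, hGz]
      -- membership equivalence
      have hiff : ∀ M : V4, M ∈ h ↔
          (G : V4) * M * ((G⁻¹ : V4ˣ) : V4) ∈ stdSubalgebra := by
        intro M
        rw [hGinv]
        show M ∈ h ↔ gv * M * gi ∈ stdSubalgebra
        rw [hchar, mem_std_iff]
        constructor
        · rintro ⟨hE, hax⟩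
          obtain ⟨k, hk⟩ := Submodule.mem_span_singleton.mp hax
          rw [hu_eq] at hk
          have e0 : M 2 1 = k * a := by
            have := congr_fun hk 0; simpa [axL_apply, vecHead, vecTail] using this.symm
          have e1 : M 0 2 = k * b := by
            have := congr_fun hk 1; simpa [axL_apply, vecHead, vecTail] using this.symm
          have e2 : M 1 0 = k * c := by
            have := congr_fun hk 2; simpa [axL_apply, vecHead, vecTail] using this.symm
          have hMEE : M = EE (k*a) (k*b) (k*c) (M 0 3) (M 1 3) (M 2 3) := by
            conv_lhs => rw [eq_EE_of_inE3 hE]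
            rw [e0, e1, e2]
          rw [hMEE, hconj]
          have hB : -y*(k*a) + x*(k*b) = 0 := by
            rw [hxdef, hydef]; ring1
          have hA : z*(x*(k*a) + y*(k*b)) - w*(k*c) = 0 := by
            rw [hxdef, hydef, hzdef, hwdef]
            exact rotA_aux k hsne hnne hs2
          rw [hA, hB]
          exact ⟨EE_inE3 _ _ _ _ _ _, by simp [EE, vecHead, vecTail], by simp [EE, vecHead, vecTail]⟩
        · intro hN
          set N : V4 := gv * M * gi with hNdef
          have hNE : inE3 N := hN.1
          have hN02 : N 0 2 = 0 := hN.2.1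
          have hN21 : N 2 1 = 0 := by
            have h1 := hNE.2 1 2 (by decide) (by decide)
            rw [hN.2.2] at h1; linarith
          have hMid : M = gi * N * gv := by
            rw [hNdef]
            calc M = (gi * gv) * M * (gi * gv) := by rw [hgi1, one_mul, mul_one]
              _ = gi * (gv * M * gi) * gv := by simp only [mul_assoc]
          have hNEE : N = EE 0 0 (N 1 0) (N 0 3) (N 1 3) (N 2 3) := by
            conv_lhs => rw [eq_EE_of_inE3 hNE]
            rw [hN21, hN02]
          have hMEE : M = EE (x*(z*0 + w*(N 1 0)) - y*0) (y*(z*0 + w*(N 1 0)) + x*0)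
              (-w*0 + z*(N 1 0))
              (x*(z*(N 0 3) + w*(N 2 3)) - y*(N 1 3))
              (y*(z*(N 0 3) + w*(N 2 3)) + x*(N 1 3)) (-w*(N 0 3) + z*(N 2 3)) := by
            rw [hMid]
            conv_lhs => rw [hNEE]
            rw [hconj']
          constructor
          · rw [hMEE]; exact EE_inE3 _ _ _ _ _ _
          · rw [Submodule.mem_span_singleton]
            refine ⟨N 1 0 / n, ?_⟩
            rw [hMEE, axL_EE, hu_eq]
            funext i
            rcases fin3cases i with hh|hh|hh <;> subst hh
            · show N 1 0/n * a = x*(z*0 + w*(N 1 0)) - y*0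
              rw [hxdef, hydef, hzdef, hwdef]
              exact comp0_aux hsne hnne
            · show N 1 0/n * b = y*(z*0 + w*(N 1 0)) + x*0
              rw [hxdef, hydef, hzdef, hwdef]
              exact comp1_aux hsne hnne
            · show N 1 0/n * c = -w*0 + z*(N 1 0)
              rw [hzdef, hwdef]
              exact comp2_aux hnne
      refine ⟨⟨G, ?_, hiff⟩, equiv_of_conj h stdSubalgebra G hiff⟩
      -- isEucl
      show isEucl gv
      rw [hgvdef, Gy_mul_Gz]
      exact isEucl_rot hxy hzw
  · -- impossible case : the rotation part would be all of so(3)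
    exfalso
    push_neg at hall
    obtain ⟨u, huW, v, hvW, hnz⟩ := hall
    have hWtop : LinearMap.range f = ⊤ :=
      span_top_of_cross huW hvW (hcl u huW v hvW) hnz
    have hfr3 : Module.finrank ℝ ↥(LinearMap.range f) = 3 := by
      rw [hWtop, finrank_top, Module.finrank_fin_fun]
    have hker1 : Module.finrank ℝ ↥(LinearMap.ker f) = 1 := by omega
    set f2 : ↥(LinearMap.ker f) →ₗ[ℝ] (Fin 3 → ℝ) :=
      trL.comp (hS.subtype.comp (LinearMap.ker f).subtype) with hf2def
    have hf2x : ∀ xx : ↥(LinearMap.ker f), f2 xx = trL ((xx : ↥hS) : V4) := fun _ => rfl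
    have hf2inj : Function.Injective f2 := by
      intro xx yy hxy
      apply Subtype.ext; apply Subtype.ext
      have hsub0 : trL (((xx : ↥hS) : V4) - ((yy : ↥hS) : V4)) = 0 := by
        rw [map_sub, sub_eq_zero, ← hf2x, ← hf2x, hxy]
      have hTm : inT (((xx : ↥hS) : V4) - ((yy : ↥hS) : V4)) := by
        have h1 : inT ((xx : ↥hS) : V4) := hkmem _ xx.2
        have h2 : inT ((yy : ↥hS) : V4) := hkmem _ yy.2
        intro i j hij
        simp [Matrix.sub_apply, h1 i j hij, h2 i j hij]
      exact sub_eq_zero.mp (eq_zero_of_inT_trL hTm hsub0)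
    have hKt1 : Module.finrank ℝ ↥(LinearMap.range f2) = 1 := by
      rw [LinearMap.finrank_range_of_inj hf2inj]; exact hker1
    have hKtne : LinearMap.range f2 ≠ ⊥ := by
      intro hb; rw [hb, finrank_bot] at hKt1; omega
    obtain ⟨t0, ht0W, ht0⟩ := (Submodule.ne_bot_iff _).mp hKtne
    have hKtspan : LinearMap.range f2 = Submodule.span ℝ {t0} := by
      apply (Submodule.eq_of_le_of_finrank_le ?_ ?_).symm
      · rw [Submodule.span_le, Set.singleton_subset_iff]; exact ht0W
      · rw [hKt1, finrank_span_singleton ht0]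
    have hclose : ∀ uu : Fin 3 → ℝ, crossProduct uu t0 ∈ LinearMap.range f2 := by
      intro uu
      obtain ⟨xx, hxx⟩ := ht0W
      have huu : uu ∈ LinearMap.range f := by rw [hWtop]; trivial
      obtain ⟨ya, hya⟩ := huu
      set A : V4 := (ya : V4) with hAdef
      set B : V4 := ((xx : ↥hS) : V4) with hBdef
      have hAE : inE3 A := he3 (hmemS.mp ya.2)
      have hBE : inE3 B := he3 (hmemS.mp (xx : ↥hS).2)
      have hBax : axL B = 0 := xx.2
      have hBtr : trL B = t0 := hxx
      have hCh : ⁅A, B⁆ ∈ hS := hmemS.mpr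
        (h.lie_mem (hmemS.mp ya.2) (hmemS.mp (xx : ↥hS).2))
      have hCax : axL ⁅A, B⁆ = 0 := by
        rw [axL_lie hAE hBE, hBax]
        exact LinearMap.map_zero _
      have hCker : (⟨⁅A, B⁆, hCh⟩ : ↥hS) ∈ LinearMap.ker f := by
        rw [LinearMap.mem_ker, hfx]
        exact hCax
      refine ⟨⟨⟨⁅A, B⁆, hCh⟩, hCker⟩, ?_⟩
      rw [hf2x]
      show trL ⁅A, B⁆ = crossProduct uu t0
      rw [trL_lie hAE hBE, hBax, hBtr]
      have hya' : axL A = uu := hya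
      rw [hya']
      have : (crossProduct (0 : Fin 3 → ℝ)) (trL A) = 0 := by
        rw [map_zero]; rfl
      rw [this, sub_zero]
    have hzero : ∀ uu : Fin 3 → ℝ, crossProduct uu t0 = 0 := by
      intro uu
      have hmem2 : crossProduct uu t0 ∈ Submodule.span ℝ {t0} := by
        rw [← hKtspan]; exact hclose uu
      obtain ⟨k, hk⟩ := Submodule.mem_span_singleton.mp hmem2
      have hdot : crossProduct uu t0 ⬝ᵥ t0 = 0 := cross_dot uu t0
      rw [← hk, smul_dotProduct] at hdot
      have ht0d : t0 ⬝ᵥ t0 ≠ 0 := fun hh => ht0 (dotProduct_self_eq_zero.mp hh)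
      have hk0 : k = 0 := by
        rcases mul_eq_zero.mp hdot with hh|hh
        · exact hh
        · exact absurd hh ht0d
      rw [← hk, hk0, zero_smul]
    apply ht0
    have hz0 := hzero ![1, 0, 0]
    have hz1 := hzero ![0, 1, 0]
    have hc00 : t0 1 = 0 := by
      have := congr_fun (cross_apply ![1, 0, 0] t0 ▸ hz0) 2
      simpa [vecHead, vecTail] using this
    have hc01 : t0 2 = 0 := by
      have := congr_fun (cross_apply ![1, 0, 0] t0 ▸ hz0) 1
      simp [vecHead, vecTail] at this
      linarith
    have hc02 : t0 0 = 0 := by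
      have := congr_fun (cross_apply ![0, 1, 0] t0 ▸ hz1) 2
      simp [vecHead, vecTail] at this
      linarith
    funext i; rcases fin3cases i with hh|hh|hh <;> subst hh <;> assumption
end
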